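/- Let G be a perfect finite simple graph of order n ≥ 1, let p, q ≥ 1, and write I(G∘(K_p ∪ K_q); x) = Σ_{i=0}^{2n} s_i x^i. Let ω = max{ω(G), p, q}. Then s_{⌈(2nω−1)/(ω+1)⌉} ≥ s_{⌈(2nω−1)/(ω+1)⌉+1} ≥ ... ≥ s_{2n−1} ≥ s_{2n}, and s_0 ≤ s_1 ≤ ... ≤ s_{t−1} ≤ s_t, where t = 2n − ⌈(2nω−1)/(ω+1)⌉. -/

import Mathlib

open Polynomial Finset
open scoped Classical

/-- A set of vertices is independent if its elements are pairwise non-adjacent. -/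
def IsIndepSet {V : Type*} (G : SimpleGraph V) (s : Finset V) : Prop :=
  ∀ u ∈ s, ∀ v ∈ s, u ≠ v → ¬ G.Adj u v

/-- The independence number: maximum cardinality of an independent set. -/
noncomputable def indepNum {V : Type*} [Fintype V] (G : SimpleGraph V) : ℕ :=
  (Finset.univ.filter (fun s : Finset V => IsIndepSet G s)).sup Finset.card

/-- The number of independent sets of cardinality `k`. -/
noncomputable def indepCount {V : Type*} [Fintype V] (G : SimpleGraph V) (k : ℕ) : ℕ :=
  (Finset.univ.filter (fun s : Finset V => IsIndepSet G s ∧ s.card = k)).card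

/-- The independence polynomial `I(G;x) = ∑ s_k x^k`. -/
noncomputable def indepPoly {V : Type*} [Fintype V] (G : SimpleGraph V) : Polynomial ℝ :=
  ∑ k ∈ Finset.range (indepNum G + 1), Polynomial.C (indepCount G k : ℝ) * Polynomial.X ^ k

/-- The corona `G ∘ H`: take `G` together with `|V(G)|` disjoint copies of `H`,
joining each vertex `v` of `G` to all vertices of the `v`-th copy of `H`. -/
def corona {V W : Type*} (G : SimpleGraph V) (H : SimpleGraph W) :
    SimpleGraph (V ⊕ V × W) where
  Adj x y :=
    match x, y with
    | Sum.inl u, Sum.inl v => G.Adj u v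
    | Sum.inl u, Sum.inr (v, _) => u = v
    | Sum.inr (v, _), Sum.inl u => u = v
    | Sum.inr (v, w), Sum.inr (v', w') => v = v' ∧ H.Adj w w'
  symm.symm := by
    rintro (u | ⟨v, w⟩) (u' | ⟨v', w'⟩) h
    · exact G.adj_symm h
    · exact h
    · exact h
    · exact ⟨h.1.symm, H.adj_symm h.2⟩
  loopless.irrefl := by
    rintro (u | ⟨v, w⟩) h
    · exact G.loopless.irrefl u h
    · exact H.loopless.irrefl w h.2

/-- The disjoint union of two graphs. -/
def disjUnion {V W : Type*} (G : SimpleGraph V) (H : SimpleGraph W) :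
    SimpleGraph (V ⊕ W) where
  Adj x y :=
    match x, y with
    | Sum.inl a, Sum.inl b => G.Adj a b
    | Sum.inr a, Sum.inr b => H.Adj a b
    | _, _ => False
  symm.symm := by
    rintro (a | a) (b | b) h
    · exact G.adj_symm h
    · exact h.elim
    · exact h.elim
    · exact H.adj_symm h
  loopless.irrefl := by
    rintro (a | a) h
    · exact G.loopless.irrefl a h
    · exact H.loopless.irrefl a h

/-- The Zykov sum (join) of two graphs. -/
def zykovSum {V W : Type*} (G : SimpleGraph V) (H : SimpleGraph W) :
    SimpleGraph (V ⊕ W) where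
  Adj x y :=
    match x, y with
    | Sum.inl a, Sum.inl b => G.Adj a b
    | Sum.inr a, Sum.inr b => H.Adj a b
    | _, _ => True
  symm.symm := by
    rintro (a | a) (b | b) h
    · exact G.adj_symm h
    · trivial
    · trivial
    · exact H.adj_symm h
  loopless.irrefl := by
    rintro (a | a) h
    · exact G.loopless.irrefl a h
    · exact H.loopless.irrefl a h

/-- `K_p - e`: the complete graph on `Fin p` minus the edge joining vertices `0` and `1`. -/
def completeMinusEdge (p : ℕ) : SimpleGraph (Fin p) where
  Adj a b := a ≠ b ∧ ¬(a.val ≤ 1 ∧ b.val ≤ 1)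
  symm.symm := fun a b ⟨h1, h2⟩ => ⟨h1.symm, fun ⟨hb, ha⟩ => h2 ⟨ha, hb⟩⟩
  loopless.irrefl := fun a ⟨h, _⟩ => h rfl

/-- The clique number of a graph. -/
noncomputable def cliqueNum {V : Type*} [Fintype V] (G : SimpleGraph V) : ℕ :=
  (Finset.univ.filter (fun s : Finset V => G.IsClique ↑s)).sup Finset.card

/-- A graph is perfect if every induced subgraph has chromatic number
equal to its clique number. -/
def IsPerfect {V : Type*} [Fintype V] (G : SimpleGraph V) : Prop :=
  ∀ s : Set V, (G.induce s).chromaticNumber = (cliqueNum (G.induce s) : ℕ∞)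

/-- The coefficient sequence `(a_0, …, a_n)` of a polynomial (indexed up to its
degree `n`) is symmetric, i.e. `a_i = a_{n-i}`. -/
def CoeffSymmetric (P : Polynomial ℝ) : Prop :=
  ∀ i ≤ P.natDegree, P.coeff i = P.coeff (P.natDegree - i)

/-- The coefficient sequence of a polynomial is unimodal with mode `k`. -/
def IsMode (P : Polynomial ℝ) (k : ℕ) : Prop :=
  k ≤ P.natDegree ∧ (∀ i, i < k → P.coeff i ≤ P.coeff (i + 1)) ∧
    (∀ i, k ≤ i → i < P.natDegree → P.coeff (i + 1) ≤ P.coeff i)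

/-- The coefficient sequence of a polynomial is unimodal. -/
def CoeffUnimodal (P : Polynomial ℝ) : Prop :=
  ∃ k, IsMode P k

/-- `k` is the unique index achieving the maximal coefficient of `P`. -/
def IsUniqueMode (P : Polynomial ℝ) (k : ℕ) : Prop :=
  k ≤ P.natDegree ∧ ∀ j ≤ P.natDegree, j ≠ k → P.coeff j < P.coeff k

/-- The polynomial has a unique mode. -/
def HasUniqueMode (P : Polynomial ℝ) : Prop :=
  ∃ k, IsUniqueMode P k


set_option linter.unusedSectionVars false

def dd (p q m r : ℕ) : ℕ :=
  ∑ a ∈ Finset.range (r + 1), (m.choose a * p ^ a) * (m.choose (r - a) * q ^ (r - a))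


lemma key1 (p m a : ℕ) :
    (a + 1) * (m.choose (a+1) * p ^ (a+1)) = (p * (m - a)) * (m.choose a * p ^ a) := by
  have h := Nat.choose_succ_right_eq m a
  calc (a + 1) * (m.choose (a+1) * p ^ (a+1))
      = (m.choose (a+1) * (a+1)) * (p * p ^ a) := by ring
    _ = (m.choose a * (m - a)) * (p * p ^ a) := by rw [h]
    _ = (p * (m - a)) * (m.choose a * p ^ a) := by ring

lemma S1gen (p q m r : ℕ) :
    (∑ a ∈ Finset.range (r + 2), a * ((m.choose a * p ^ a) * (m.choose (r+1 - a) * q ^ (r+1 - a))))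
      = ∑ a ∈ Finset.range (r + 1), (p * (m - a)) * ((m.choose a * p ^ a) * (m.choose (r - a) * q ^ (r - a))) := by
  rw [Finset.sum_range_succ' (fun a => a * ((m.choose a * p ^ a) * (m.choose (r+1 - a) * q ^ (r+1 - a))))]
  simp only [zero_mul, add_zero]
  refine Finset.sum_congr rfl fun a ha => ?_
  have hle : a ≤ r := by simp at ha; omega
  have h1 : r + 1 - (a + 1) = r - a := by omega
  rw [h1, show (a + 1) * (m.choose (a + 1) * p ^ (a + 1) * (m.choose (r - a) * q ^ (r - a)))
      = ((a+1) * (m.choose (a+1) * p ^ (a+1))) * (m.choose (r-a) * q ^ (r-a)) from by ring,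
    key1]
  ring

lemma dd_succ_mul (p q m r : ℕ) :
    (r + 1) * dd p q m (r + 1) =
      ∑ a ∈ Finset.range (r + 1),
        (p * (m - a) + q * (m - (r - a))) *
          ((m.choose a * p ^ a) * (m.choose (r - a) * q ^ (r - a))) := by
  have split : (r + 1) * dd p q m (r + 1)
      = (∑ a ∈ Finset.range (r + 2), a * ((m.choose a * p ^ a) * (m.choose (r+1 - a) * q ^ (r+1 - a))))
      + (∑ a ∈ Finset.range (r + 2), (r+1-a) * ((m.choose a * p ^ a) * (m.choose (r+1 - a) * q ^ (r+1 - a)))) := by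
    rw [dd, Finset.mul_sum, ← Finset.sum_add_distrib]
    refine Finset.sum_congr rfl fun a ha => ?_
    have h1 : a ≤ r + 1 := by simp at ha; omega
    have h2 : a + (r + 1 - a) = r + 1 := by omega
    rw [← add_mul, h2]
  have S2 : (∑ a ∈ Finset.range (r + 2), (r+1-a) * ((m.choose a * p ^ a) * (m.choose (r+1 - a) * q ^ (r+1 - a))))
      = ∑ a ∈ Finset.range (r + 1), (q * (m - (r - a))) * ((m.choose a * p ^ a) * (m.choose (r - a) * q ^ (r - a))) := by
    calc (∑ a ∈ Finset.range (r + 2), (r+1-a) * ((m.choose a * p ^ a) * (m.choose (r+1 - a) * q ^ (r+1 - a))))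
        = ∑ j ∈ Finset.range (r + 2), j * ((m.choose j * q ^ j) * (m.choose (r+1-j) * p ^ (r+1-j))) := by
          rw [← Finset.sum_range_reflect]
          refine Finset.sum_congr rfl fun j hj => ?_
          have hle : j ≤ r + 1 := by simp at hj; omega
          have h1 : r + 2 - 1 - j = r + 1 - j := by omega
          have h2 : r + 1 - (r + 1 - j) = j := by omega
          rw [h1, h2]; ring
      _ = ∑ j ∈ Finset.range (r + 1), (q * (m - j)) * ((m.choose j * q ^ j) * (m.choose (r - j) * p ^ (r - j))) :=
          S1gen q p m r
      _ = ∑ a ∈ Finset.range (r + 1), (q * (m - (r - a))) * ((m.choose a * p ^ a) * (m.choose (r - a) * q ^ (r - a))) := by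
          rw [← Finset.sum_range_reflect]
          refine Finset.sum_congr rfl fun a ha => ?_
          have hle : a ≤ r := by simp at ha; omega
          have h1 : r + 1 - 1 - a = r - a := by omega
          have h2 : r - (r - a) = a := by omega
          rw [h1, h2]; ring
  rw [split, S1gen, S2, ← Finset.sum_add_distrib]
  refine Finset.sum_congr rfl fun a ha => ?_
  ring

lemma dd_upper (p q m r ω : ℕ) (hp : p ≤ ω) (hq : q ≤ ω) :
    (r + 1) * dd p q m (r + 1) ≤ (ω * (2 * m - r)) * dd p q m r := by
  rw [dd_succ_mul, dd, Finset.mul_sum]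
  refine Finset.sum_le_sum fun a ha => ?_
  rcases le_or_gt a m with ham | ham
  · rcases le_or_gt (r - a) m with hbm | hbm
    · refine Nat.mul_le_mul_right _ ?_
      have h1 : p * (m - a) ≤ ω * (m - a) := Nat.mul_le_mul_right _ hp
      have h2 : q * (m - (r - a)) ≤ ω * (m - (r - a)) := Nat.mul_le_mul_right _ hq
      have h3 : ω * (m - a) + ω * (m - (r - a)) = ω * ((m - a) + (m - (r - a))) := by ring
      have h4 : (m - a) + (m - (r - a)) ≤ 2 * m - r := by omega
      have h5 : ω * ((m - a) + (m - (r - a))) ≤ ω * (2 * m - r) := Nat.mul_le_mul_left _ h4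
      omega
    · have : m.choose (r - a) = 0 := Nat.choose_eq_zero_of_lt hbm
      simp [this]
  · have : m.choose a = 0 := Nat.choose_eq_zero_of_lt ham
    simp [this]

lemma dd_lower (p q m r : ℕ) (hp : 1 ≤ p) (hq : 1 ≤ q) :
    (2 * m - r) * dd p q m r ≤ (r + 1) * dd p q m (r + 1) := by
  rw [dd_succ_mul, dd, Finset.mul_sum]
  refine Finset.sum_le_sum fun a ha => ?_
  have har : a ≤ r := by simp at ha; omega
  rcases le_or_gt a m with ham | ham
  · rcases le_or_gt (r - a) m with hbm | hbm
    · refine Nat.mul_le_mul_right _ ?_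
      have h1 : 1 * (m - a) ≤ p * (m - a) := Nat.mul_le_mul_right _ hp
      have h2 : 1 * (m - (r - a)) ≤ q * (m - (r - a)) := Nat.mul_le_mul_right _ hq
      have h4 : 2 * m - r ≤ (m - a) + (m - (r - a)) := by omega
      omega
    · have : m.choose (r - a) = 0 := Nat.choose_eq_zero_of_lt hbm
      simp [this]
  · have : m.choose a = 0 := Nat.choose_eq_zero_of_lt ham
    simp [this]

lemma dd_decr (p q m r ω : ℕ) (hp : p ≤ ω) (hq : q ≤ ω) (h : ω * (2 * m - r) ≤ r + 1) :
    dd p q m (r + 1) ≤ dd p q m r := by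
  have h1 := dd_upper p q m r ω hp hq
  have h2 : (ω * (2 * m - r)) * dd p q m r ≤ (r + 1) * dd p q m r :=
    Nat.mul_le_mul_right _ h
  exact Nat.le_of_mul_le_mul_left (le_trans h1 h2) (by omega)

lemma dd_incr (p q m r : ℕ) (hp : 1 ≤ p) (hq : 1 ≤ q) (h : r + 1 ≤ m) :
    dd p q m r ≤ dd p q m (r + 1) := by
  have h1 := dd_lower p q m r hp hq
  have h2 : (r + 1) * dd p q m r ≤ (2 * m - r) * dd p q m r :=
    Nat.mul_le_mul_right _ (by omega)
  exact Nat.le_of_mul_le_mul_left (le_trans h2 h1) (by omega)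

lemma powerset_sum_card {V : Type*} [DecidableEq V] (s : Finset V) (h : ℕ → ℕ) :
    ∑ A ∈ s.powerset, h A.card = ∑ a ∈ Finset.range (s.card + 1), s.card.choose a * h a := by
  rw [Finset.sum_powerset]
  refine Finset.sum_congr rfl fun a ha => ?_
  have : ∀ A ∈ Finset.powersetCard a s, h A.card = h a := by
    intro A hA
    rw [(Finset.mem_powersetCard.mp hA).2]
  rw [Finset.sum_congr rfl this, Finset.sum_const, Finset.card_powersetCard, smul_eq_mul]

lemma double_binom (p q M c : ℕ) :
    (∑ a ∈ Finset.range (M + 1), ∑ b ∈ Finset.range (M + 1),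
      (if a + b = c then (M.choose a * p ^ a) * (M.choose b * q ^ b) else 0)) = dd p q M c := by
  have hext : ∀ (f : ℕ → ℕ), (∀ x, M < x → f x = 0) →
      ∑ x ∈ Finset.range (M + 1), f x = ∑ x ∈ Finset.range (M + c + 1), f x := by
    intro f hf
    refine Finset.sum_subset (Finset.range_subset_range.mpr (by omega)) fun x _ hx => ?_
    exact hf x (by simp at hx ⊢; omega)
  calc (∑ a ∈ Finset.range (M + 1), ∑ b ∈ Finset.range (M + 1),
      (if a + b = c then (M.choose a * p ^ a) * (M.choose b * q ^ b) else 0))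
      = ∑ a ∈ Finset.range (M + c + 1), ∑ b ∈ Finset.range (M + c + 1),
        (if a + b = c then (M.choose a * p ^ a) * (M.choose b * q ^ b) else 0) := by
        rw [← hext _ (fun x hx => by
          refine Finset.sum_eq_zero fun b hb => ?_
          rw [Nat.choose_eq_zero_of_lt hx]; simp)]
        refine Finset.sum_congr rfl fun a ha => ?_
        rw [← hext _ (fun x hx => by rw [Nat.choose_eq_zero_of_lt hx]; simp)]
    _ = ∑ a ∈ Finset.range (M + c + 1),
        (if a ≤ c then (M.choose a * p ^ a) * (M.choose (c - a) * q ^ (c - a)) else 0) := by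
        refine Finset.sum_congr rfl fun a ha => ?_
        rcases le_or_gt a c with h | h
        · have hcond : ∀ b, (a + b = c) ↔ (b = c - a) := by omega
          simp only [hcond]
          rw [Finset.sum_ite_eq' (Finset.range (M + c + 1)) (c - a)
            (fun b => (M.choose a * p ^ a) * (M.choose b * q ^ b))]
          rw [if_pos (by simp; omega), if_pos h]
        · rw [if_neg (by omega)]
          refine Finset.sum_eq_zero fun b hb => ?_
          rw [if_neg (by omega)]
    _ = dd p q M c := by
        rw [dd, ← Finset.sum_filter]
        refine Finset.sum_congr ?_ fun a ha => rfl
        ext a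
        simp only [Finset.mem_filter, Finset.mem_range]
        omega


lemma subcompl {V : Type*} [Fintype V] [DecidableEq V] (A S : Finset V) :
    Disjoint A S ↔ A ⊆ Sᶜ := by
  rw [Finset.disjoint_left, Finset.subset_iff]
  simp [Finset.mem_compl]

lemma pair_sum {V : Type*} [Fintype V] [DecidableEq V] (p q i : ℕ) (S : Finset V) :
    ∑ A ∈ Sᶜ.powerset, ∑ B ∈ Sᶜ.powerset,
      (if S.card + A.card + B.card = i then p ^ A.card * q ^ B.card else 0)
    = if S.card ≤ i then dd p q (Sᶜ.card) (i - S.card) else 0 := by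
  rcases le_or_gt S.card i with h | h
  · rw [if_pos h, ← double_binom p q (Sᶜ.card) (i - S.card)]
    rw [powerset_sum_card Sᶜ
      (fun a => ∑ B ∈ Sᶜ.powerset, (if S.card + a + B.card = i then p ^ a * q ^ B.card else 0))]
    refine Finset.sum_congr rfl fun a ha => ?_
    rw [powerset_sum_card Sᶜ
      (fun b => (if S.card + a + b = i then p ^ a * q ^ b else 0)), Finset.mul_sum]
    refine Finset.sum_congr rfl fun b hb => ?_
    have hcond : (S.card + a + b = i) ↔ (a + b = i - S.card) := by omega
    rcases em (a + b = i - S.card) with hc | hc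
    · rw [if_pos hc, if_pos (hcond.mpr hc)]
      ring
    · rw [if_neg hc, if_neg (fun hx => hc (hcond.mp hx))]
      ring
  · rw [if_neg (by omega)]
    refine Finset.sum_eq_zero fun A hA => Finset.sum_eq_zero fun B hB => ?_
    rw [if_neg (by omega)]

section Corona

variable {V : Type*} [Fintype V] (G : SimpleGraph V) (p q : ℕ)

local notation "U" => (V ⊕ V × (Fin p ⊕ Fin q))

def CC : SimpleGraph (V ⊕ V × (Fin p ⊕ Fin q)) :=
  corona G (disjUnion (⊤ : SimpleGraph (Fin p)) (⊤ : SimpleGraph (Fin q)))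

variable {G p q}

lemma CC_adj_ll {u v : V} : (CC G p q).Adj (Sum.inl u) (Sum.inl v) ↔ G.Adj u v := Iff.rfl

lemma CC_adj_lr {u v : V} {w : Fin p ⊕ Fin q} :
    (CC G p q).Adj (Sum.inl u) (Sum.inr (v, w)) ↔ u = v := Iff.rfl

lemma CC_adj_rr {v v' : V} {w w' : Fin p ⊕ Fin q} :
    (CC G p q).Adj (Sum.inr (v, w)) (Sum.inr (v', w')) ↔
      v = v' ∧ (disjUnion (⊤ : SimpleGraph (Fin p)) (⊤ : SimpleGraph (Fin q))).Adj w w' := Iff.rfl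

lemma K_adj_ll {a b : Fin p} :
    (disjUnion (⊤ : SimpleGraph (Fin p)) (⊤ : SimpleGraph (Fin q))).Adj (Sum.inl a) (Sum.inl b) ↔ a ≠ b := Iff.rfl

lemma K_adj_rr {a b : Fin q} :
    (disjUnion (⊤ : SimpleGraph (Fin p)) (⊤ : SimpleGraph (Fin q))).Adj (Sum.inr a) (Sum.inr b) ↔ a ≠ b := Iff.rfl

lemma K_adj_lr {a : Fin p} {b : Fin q} :
    ¬ (disjUnion (⊤ : SimpleGraph (Fin p)) (⊤ : SimpleGraph (Fin q))).Adj (Sum.inl a) (Sum.inr b) :=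
  fun h => h

lemma K_adj_rl {a : Fin q} {b : Fin p} :
    ¬ (disjUnion (⊤ : SimpleGraph (Fin p)) (⊤ : SimpleGraph (Fin q))).Adj (Sum.inr a) (Sum.inl b) :=
  fun h => h

variable (p q)

noncomputable def Sof (T : Finset (V ⊕ V × (Fin p ⊕ Fin q))) : Finset V :=
  univ.filter (fun v => Sum.inl v ∈ T)

noncomputable def Aof (T : Finset (V ⊕ V × (Fin p ⊕ Fin q))) : Finset V :=
  univ.filter (fun v => ∃ w : Fin p, Sum.inr (v, Sum.inl w) ∈ T)

noncomputable def Bof (T : Finset (V ⊕ V × (Fin p ⊕ Fin q))) : Finset V :=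
  univ.filter (fun v => ∃ w : Fin q, Sum.inr (v, Sum.inr w) ∈ T)

variable {p q}

lemma mem_Sof {T : Finset (V ⊕ V × (Fin p ⊕ Fin q))} {v : V} :
    v ∈ Sof p q T ↔ Sum.inl v ∈ T := by simp [Sof]

lemma mem_Aof {T : Finset (V ⊕ V × (Fin p ⊕ Fin q))} {v : V} :
    v ∈ Aof p q T ↔ ∃ w : Fin p, Sum.inr (v, Sum.inl w) ∈ T := by simp [Aof]

lemma mem_Bof {T : Finset (V ⊕ V × (Fin p ⊕ Fin q))} {v : V} :
    v ∈ Bof p q T ↔ ∃ w : Fin q, Sum.inr (v, Sum.inr w) ∈ T := by simp [Bof]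

def projV : (V ⊕ V × (Fin p ⊕ Fin q)) → V := Sum.elim id Prod.fst

lemma card_decomp {T : Finset (V ⊕ V × (Fin p ⊕ Fin q))} (hT : IsIndepSet (CC G p q) T) :
    T.card = (Sof p q T).card + (Aof p q T).card + (Bof p q T).card := by
  classical
  set P1 : (V ⊕ V × (Fin p ⊕ Fin q)) → Prop := fun x => ∃ v, x = Sum.inl v with hP1
  set P2 : (V ⊕ V × (Fin p ⊕ Fin q)) → Prop := fun x => ∃ v w, x = Sum.inr (v, Sum.inl w) with hP2
  have hsplit1 : (T.filter P1).card + (T.filter (fun x => ¬ P1 x)).card = T.card :=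
    Finset.card_filter_add_card_filter_not _
  have hsplit2 : ((T.filter (fun x => ¬ P1 x)).filter P2).card
      + ((T.filter (fun x => ¬ P1 x)).filter (fun x => ¬ P2 x)).card
      = (T.filter (fun x => ¬ P1 x)).card :=
    Finset.card_filter_add_card_filter_not _
  have e1 : Sof p q T = (T.filter P1).image (projV) := by
    ext v
    simp only [mem_Sof, Finset.mem_image, Finset.mem_filter, hP1]
    constructor
    · intro h; exact ⟨Sum.inl v, ⟨h, ⟨v, rfl⟩⟩, rfl⟩
    · rintro ⟨x, ⟨hx, v', rfl⟩, hproj⟩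
      simpa [projV] using hproj ▸ hx
  have c1 : (T.filter P1).card = (Sof p q T).card := by
    rw [e1]
    refine (Finset.card_image_of_injOn ?_).symm
    rintro x hx y hy hxy
    simp only [Finset.coe_filter, Set.mem_setOf_eq, hP1] at hx hy
    obtain ⟨-, v, rfl⟩ := hx
    obtain ⟨-, v', rfl⟩ := hy
    simpa [projV] using hxy
  have e2 : Aof p q T = ((T.filter (fun x => ¬ P1 x)).filter P2).image projV := by
    ext v
    simp only [mem_Aof, Finset.mem_image, Finset.mem_filter, hP1, hP2]
    constructor
    · rintro ⟨w, hw⟩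
      exact ⟨Sum.inr (v, Sum.inl w), ⟨⟨hw, by simp⟩, ⟨v, w, rfl⟩⟩, rfl⟩
    · rintro ⟨x, hx, hproj⟩
      obtain ⟨⟨hxT, -⟩, v', w, rfl⟩ := hx
      have hv : v' = v := by simpa [projV] using hproj
      exact ⟨w, by rwa [hv] at hxT⟩
  have c2 : ((T.filter (fun x => ¬ P1 x)).filter P2).card = (Aof p q T).card := by
    rw [e2]
    refine (Finset.card_image_of_injOn ?_).symm
    rintro x hx y hy hxy
    simp only [Finset.coe_filter, Set.mem_setOf_eq, hP1, hP2, Finset.mem_filter] at hx hy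
    obtain ⟨⟨hxT, -⟩, v, w, rfl⟩ := hx
    obtain ⟨⟨hyT, -⟩, v', w', rfl⟩ := hy
    have hvv : v = v' := by simpa [projV] using hxy
    subst hvv
    have hxT : Sum.inr (v, Sum.inl w) ∈ T := hxT
    have hyT : Sum.inr (v, Sum.inl w') ∈ T := hyT
    by_cases hww : w = w'
    · rw [hww]
    · exact (hT _ hxT _ hyT (by simp [hww]) (CC_adj_rr.mpr ⟨rfl, K_adj_ll.mpr hww⟩)).elim
  have e3 : (T.filter (fun x => ¬ P1 x)).filter (fun x => ¬ P2 x)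
      = T.filter (fun x => ∃ v w, x = Sum.inr (v, Sum.inr w)) := by
    ext x
    simp only [Finset.mem_filter, hP1, hP2, Finset.filter_filter]
    rcases x with v | ⟨v, w | w⟩ <;> simp
  have e3' : Bof p q T = (T.filter (fun x => ∃ v w, x = Sum.inr (v, Sum.inr w))).image projV := by
    ext v
    simp only [mem_Bof, Finset.mem_image, Finset.mem_filter]
    constructor
    · rintro ⟨w, hw⟩
      exact ⟨Sum.inr (v, Sum.inr w), ⟨hw, ⟨v, w, rfl⟩⟩, rfl⟩
    · rintro ⟨x, ⟨hx, v', w, rfl⟩, hproj⟩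
      simp only [projV, Sum.elim_inr] at hproj
      exact ⟨w, by rwa [← hproj]⟩
  have c3 : ((T.filter (fun x => ¬ P1 x)).filter (fun x => ¬ P2 x)).card = (Bof p q T).card := by
    rw [e3, e3']
    refine (Finset.card_image_of_injOn ?_).symm
    rintro x hx y hy hxy
    simp only [Finset.coe_filter, Set.mem_setOf_eq] at hx hy
    obtain ⟨hxT, v, w, rfl⟩ := hx
    obtain ⟨hyT, v', w', rfl⟩ := hy
    have hvv : v = v' := by simpa [projV] using hxy
    subst hvv
    by_cases hww : w = w'
    · rw [hww]
    · exact (hT _ hxT _ hyT (by simp [hww]) (CC_adj_rr.mpr ⟨rfl, K_adj_rr.mpr hww⟩)).elim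
  omega

end Corona

section Fiber

variable {V : Type*} [Fintype V] {G : SimpleGraph V} {p q : ℕ}

noncomputable def build (S A B : Finset V)
    (f : ∀ a ∈ A, Fin p) (g : ∀ b ∈ B, Fin q) : Finset (V ⊕ V × (Fin p ⊕ Fin q)) :=
  S.image Sum.inl ∪ A.attach.image (fun a => Sum.inr (a.1, Sum.inl (f a.1 a.2)))
    ∪ B.attach.image (fun b => Sum.inr (b.1, Sum.inr (g b.1 b.2)))

variable {S A B : Finset V} {f : ∀ a ∈ A, Fin p} {g : ∀ b ∈ B, Fin q}

lemma mem_build_inl {v : V} : Sum.inl v ∈ build S A B f g ↔ v ∈ S := by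
  simp [build]

lemma mem_build_inrl {v : V} {w : Fin p} :
    Sum.inr (v, Sum.inl w) ∈ build S A B f g ↔ ∃ h : v ∈ A, f v h = w := by
  simp only [build, Finset.mem_union, Finset.mem_image, Finset.mem_attach]
  constructor
  · rintro ((⟨u, hu, h⟩ | ⟨⟨a, ha⟩, -, h⟩) | ⟨⟨b, hb⟩, -, h⟩)
    · exact absurd h (by simp)
    · obtain ⟨h1, h2⟩ := Prod.mk.injEq _ _ _ _ ▸ Sum.inr.injEq _ _ ▸ h
      exact ⟨h1 ▸ ha, by subst h1; exact Sum.inl.injEq _ _ ▸ h2⟩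
    · exact absurd h (by simp)
  · rintro ⟨hv, rfl⟩
    exact Or.inl (Or.inr ⟨⟨v, hv⟩, trivial, rfl⟩)

lemma mem_build_inrr {v : V} {w : Fin q} :
    Sum.inr (v, Sum.inr w) ∈ build S A B f g ↔ ∃ h : v ∈ B, g v h = w := by
  simp only [build, Finset.mem_union, Finset.mem_image, Finset.mem_attach]
  constructor
  · rintro ((⟨u, hu, h⟩ | ⟨⟨a, ha⟩, -, h⟩) | ⟨⟨b, hb⟩, -, h⟩)
    · exact absurd h (by simp)
    · exact absurd h (by simp)
    · obtain ⟨h1, h2⟩ := Prod.mk.injEq _ _ _ _ ▸ Sum.inr.injEq _ _ ▸ h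
      exact ⟨h1 ▸ hb, by subst h1; exact Sum.inr.injEq _ _ ▸ h2⟩
  · rintro ⟨hv, rfl⟩
    exact Or.inr ⟨⟨v, hv⟩, trivial, rfl⟩

end Fiber

section Fiber2

variable {V : Type*} [Fintype V] {G : SimpleGraph V} {p q : ℕ}
variable {S A B : Finset V} {f : ∀ a ∈ A, Fin p} {g : ∀ b ∈ B, Fin q}

lemma build_indep (hS : IsIndepSet G S) (hA : Disjoint A S) (hB : Disjoint B S) :
    IsIndepSet (CC G p q) (build S A B f g) := by
  rintro (u | ⟨u, wu | wu⟩) hx (v | ⟨v, wv | wv⟩) hy hne hadj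
  · exact hS u (mem_build_inl.mp hx) v (mem_build_inl.mp hy) (fun h => hne (by rw [h])) hadj
  · obtain rfl : u = v := hadj
    exact Finset.disjoint_left.mp hA (mem_build_inrl.mp hy).1 (mem_build_inl.mp hx)
  · obtain rfl : u = v := hadj
    exact Finset.disjoint_left.mp hB (mem_build_inrr.mp hy).1 (mem_build_inl.mp hx)
  · obtain rfl : v = u := hadj
    exact Finset.disjoint_left.mp hA (mem_build_inrl.mp hx).1 (mem_build_inl.mp hy)
  · obtain ⟨rfl, hadj2⟩ := CC_adj_rr.mp hadj
    obtain ⟨h1, e1⟩ := mem_build_inrl.mp hx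
    obtain ⟨h2, e2⟩ := mem_build_inrl.mp hy
    exact (K_adj_ll.mp hadj2) (by rw [← e1, ← e2])
  · exact K_adj_lr (CC_adj_rr.mp hadj).2
  · obtain rfl : v = u := hadj
    exact Finset.disjoint_left.mp hB (mem_build_inrr.mp hx).1 (mem_build_inl.mp hy)
  · exact K_adj_rl (CC_adj_rr.mp hadj).2
  · obtain ⟨rfl, hadj2⟩ := CC_adj_rr.mp hadj
    obtain ⟨h1, e1⟩ := mem_build_inrr.mp hx
    obtain ⟨h2, e2⟩ := mem_build_inrr.mp hy
    exact (K_adj_rr.mp hadj2) (by rw [← e1, ← e2])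

lemma build_Sof : Sof p q (build S A B f g) = S := by
  ext v; rw [mem_Sof, mem_build_inl]

lemma build_Aof : Aof p q (build S A B f g) = A := by
  ext v
  rw [mem_Aof]
  constructor
  · rintro ⟨w, hw⟩; exact (mem_build_inrl.mp hw).1
  · intro hv; exact ⟨f v hv, mem_build_inrl.mpr ⟨hv, rfl⟩⟩

lemma build_Bof : Bof p q (build S A B f g) = B := by
  ext v
  rw [mem_Bof]
  constructor
  · rintro ⟨w, hw⟩; exact (mem_build_inrr.mp hw).1
  · intro hv; exact ⟨g v hv, mem_build_inrr.mpr ⟨hv, rfl⟩⟩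

lemma fiber_card (G : SimpleGraph V) (p q : ℕ) (S A B : Finset V)
    (hS : IsIndepSet G S) (hA : Disjoint A S) (hB : Disjoint B S) :
    ((univ : Finset (Finset (V ⊕ V × (Fin p ⊕ Fin q)))).filter
        (fun T => IsIndepSet (CC G p q) T ∧ Sof p q T = S ∧ Aof p q T = A ∧ Bof p q T = B)).card
      = p ^ A.card * q ^ B.card := by
  classical
  rw [← Finset.card_bij
    (i := fun (fg : (∀ a ∈ A, Fin p) × (∀ b ∈ B, Fin q)) (_ : fg ∈
        (A.pi (fun _ => (univ : Finset (Fin p)))) ×ˢ (B.pi (fun _ => (univ : Finset (Fin q))))) =>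
      build S A B fg.1 fg.2)
    (fun fg hfg => by
      simp only [Finset.mem_filter, Finset.mem_univ, true_and]
      exact ⟨build_indep hS hA hB, build_Sof, build_Aof, build_Bof⟩)
    (fun fg hfg fg' hfg' heq => by
      obtain ⟨f, g⟩ := fg
      obtain ⟨f', g'⟩ := fg'
      simp only at heq
      simp only [Prod.mk.injEq]
      constructor
      · funext a ha
        have h1 : Sum.inr (a, Sum.inl (f a ha)) ∈ build S A B f g := mem_build_inrl.mpr ⟨ha, rfl⟩
        rw [heq] at h1
        obtain ⟨ha', e⟩ := mem_build_inrl.mp h1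
        exact e.symm
      · funext b hb
        have h1 : Sum.inr (b, Sum.inr (g b hb)) ∈ build S A B f g := mem_build_inrr.mpr ⟨hb, rfl⟩
        rw [heq] at h1
        obtain ⟨hb', e⟩ := mem_build_inrr.mp h1
        exact e.symm)
    (fun T hT => by
      simp only [Finset.mem_filter, Finset.mem_univ, true_and] at hT
      obtain ⟨hind, hSf, hAf, hBf⟩ := hT
      have exf : ∀ a ∈ A, ∃ w : Fin p, Sum.inr (a, Sum.inl w) ∈ T := by
        intro a ha
        exact mem_Aof.mp (hAf ▸ ha)
      have exg : ∀ b ∈ B, ∃ w : Fin q, Sum.inr (b, Sum.inr w) ∈ T := by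
        intro b hb
        exact mem_Bof.mp (hBf ▸ hb)
      refine ⟨⟨fun a ha => Classical.choose (exf a ha), fun b hb => Classical.choose (exg b hb)⟩,
        by simp [Finset.mem_pi], ?_⟩
      ext x
      rcases x with v | ⟨v, w | w⟩
      · rw [mem_build_inl, ← mem_Sof (T := T), hSf]
      · rw [mem_build_inrl]
        constructor
        · rintro ⟨hv, rfl⟩
          exact Classical.choose_spec (exf v hv)
        · intro hx
          have hv : v ∈ A := hAf ▸ mem_Aof.mpr ⟨w, hx⟩
          refine ⟨hv, ?_⟩
          by_contra hne
          have hmem := Classical.choose_spec (exf v hv)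
          exact hind _ hmem _ hx (by simp [hne]) (CC_adj_rr.mpr ⟨rfl, K_adj_ll.mpr hne⟩)
      · rw [mem_build_inrr]
        constructor
        · rintro ⟨hv, rfl⟩
          exact Classical.choose_spec (exg v hv)
        · intro hx
          have hv : v ∈ B := hBf ▸ mem_Bof.mpr ⟨w, hx⟩
          refine ⟨hv, ?_⟩
          by_contra hne
          have hmem := Classical.choose_spec (exg v hv)
          exact hind _ hmem _ hx (by simp [hne]) (CC_adj_rr.mpr ⟨rfl, K_adj_rr.mpr hne⟩))]
  rw [Finset.card_product, Finset.card_pi, Finset.card_pi]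
  simp

end Fiber2


section Stage1

variable {V : Type*} [Fintype V] (G : SimpleGraph V) (p q : ℕ)

noncomputable def Idx (i : ℕ) : Finset (Finset V × Finset V × Finset V) :=
  univ.filter (fun x => IsIndepSet G x.1 ∧ Disjoint x.2.1 x.1 ∧ Disjoint x.2.2 x.1 ∧
    x.1.card + x.2.1.card + x.2.2.card = i)

lemma stage1 (i : ℕ) :
    indepCount (CC G p q) i = ∑ x ∈ Idx G i, p ^ x.2.1.card * q ^ x.2.2.card := by
  classical
  rw [indepCount, Finset.card_eq_sum_card_fiberwise
    (f := fun T => (Sof p q T, Aof p q T, Bof p q T)) (t := Idx G i) ?hmaps]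
  case hmaps =>
    intro T hT
    obtain ⟨hind, hcard⟩ := (Finset.mem_filter.mp hT).2
    rw [Idx, Finset.mem_coe, Finset.mem_filter]
    refine ⟨Finset.mem_univ _, ?_, ?_, ?_, ?_⟩
    · intro u hu v hv hne hadj
      exact hind _ (mem_Sof.mp hu) _ (mem_Sof.mp hv) (by simpa using hne) hadj
    · rw [Finset.disjoint_left]
      rintro v hvA hvS
      obtain ⟨w, hw⟩ := mem_Aof.mp hvA
      exact hind _ (mem_Sof.mp hvS) _ hw (by simp) (CC_adj_lr.mpr rfl)
    · rw [Finset.disjoint_left]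
      rintro v hvB hvS
      obtain ⟨w, hw⟩ := mem_Bof.mp hvB
      exact hind _ (mem_Sof.mp hvS) _ hw (by simp) (CC_adj_lr.mpr rfl)
    · rw [← card_decomp hind]; exact hcard
  refine Finset.sum_congr rfl fun x hx => ?_
  obtain ⟨S, A, B⟩ := x
  obtain ⟨hS, hA, hB, hsum⟩ := (Finset.mem_filter.mp hx).2
  have hfe : ((univ.filter (fun T => IsIndepSet (CC G p q) T ∧ T.card = i)).filter
        (fun T => (Sof p q T, Aof p q T, Bof p q T) = (S, A, B)))
      = ((univ : Finset (Finset (V ⊕ V × (Fin p ⊕ Fin q)))).filter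
        (fun T => IsIndepSet (CC G p q) T ∧ Sof p q T = S ∧ Aof p q T = A ∧ Bof p q T = B)) := by
    ext T
    simp only [Finset.mem_filter, Finset.mem_univ, true_and, Prod.mk.injEq]
    constructor
    · rintro ⟨⟨hind, -⟩, h1, h2, h3⟩
      exact ⟨hind, h1, h2, h3⟩
    · rintro ⟨hind, h1, h2, h3⟩
      refine ⟨⟨hind, ?_⟩, h1, h2, h3⟩
      rw [card_decomp hind, h1, h2, h3]
      exact hsum
  rw [hfe, fiber_card G p q S A B hS hA hB]

end Stage1

section Count

variable {V : Type*} [Fintype V] (G : SimpleGraph V) (p q : ℕ)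

lemma countformula (i : ℕ) :
    indepCount (CC G p q) i = ∑ S ∈ univ.filter (fun S : Finset V => IsIndepSet G S),
      (if S.card ≤ i then dd p q (Fintype.card V - S.card) (i - S.card) else 0) := by
  classical
  rw [stage1]
  rw [← Finset.sum_fiberwise_of_maps_to (g := fun x => x.1)
    (t := univ.filter (fun S : Finset V => IsIndepSet G S))
    (fun x hx => by
      simp only [Finset.mem_filter, Finset.mem_univ, true_and]
      exact ((Finset.mem_filter.mp hx).2).1)]
  refine Finset.sum_congr rfl fun S hS => ?_
  have hstep : ∑ x ∈ (Idx G i).filter (fun x => x.1 = S), p ^ x.2.1.card * q ^ x.2.2.card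
      = ∑ y ∈ ((Sᶜ.powerset ×ˢ Sᶜ.powerset).filter
          (fun y : Finset V × Finset V => S.card + y.1.card + y.2.card = i)),
        p ^ y.1.card * q ^ y.2.card := by
    refine Finset.sum_nbij' (i := fun x => (x.2.1, x.2.2)) (j := fun y => (S, y.1, y.2))
      ?_ ?_ ?_ ?_ ?_
    · intro x hx
      simp only [Finset.mem_filter, Idx, Finset.mem_univ, true_and] at hx
      obtain ⟨⟨hind, hA, hB, hsum⟩, hfst⟩ := hx
      subst hfst
      simp only [Finset.mem_filter, Finset.mem_product, Finset.mem_powerset]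
      exact ⟨⟨(subcompl _ _).mp hA, (subcompl _ _).mp hB⟩, hsum⟩
    · intro y hy
      simp only [Finset.mem_filter, Finset.mem_product, Finset.mem_powerset] at hy
      obtain ⟨⟨hA, hB⟩, hsum⟩ := hy
      simp only [Finset.mem_filter, Idx, Finset.mem_univ, true_and]
      refine ⟨⟨(Finset.mem_filter.mp hS).2, (subcompl _ _).mpr hA, (subcompl _ _).mpr hB, hsum⟩, trivial⟩
    · intro x hx
      simp only [Finset.mem_filter] at hx
      rw [← hx.2]
    · intro y hy
      rfl
    · intro x hx
      rfl
  rw [hstep, Finset.sum_filter, Finset.sum_product, ← Finset.card_compl]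
  exact pair_sum p q i S

end Count


section Main

variable {V : Type*} [Fintype V]

lemma kfact (n ω : ℕ) (hω1 : 1 ≤ ω) :
    2 * n * ω - 1 ≤ (ω + 1) * ((2 * n * ω - 1 + ω) / (ω + 1)) := by
  have hd := Nat.div_add_mod (2 * n * ω - 1 + ω) (ω + 1)
  have hm : (2 * n * ω - 1 + ω) % (ω + 1) < ω + 1 := Nat.mod_lt _ (by omega)
  omega

lemma kfact2 (n ω : ℕ) (hω1 : 1 ≤ ω) : n ≤ (2 * n * ω - 1 + ω) / (ω + 1) := by
  rw [Nat.le_div_iff_mul_le (by omega)]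
  have h1 : n * 1 ≤ n * ω := Nat.mul_le_mul_left n hω1
  have h2 : 2 * n * ω = n * ω + n * ω := by ring
  have h3 : n * (ω + 1) = n * ω + n * 1 := by ring
  omega

lemma main_decr (G : SimpleGraph V) (n p q ω : ℕ) (hn : Fintype.card V = n)
    (hp : 1 ≤ p) (hq : 1 ≤ q) (hpω : p ≤ ω) (hqω : q ≤ ω) :
    ∀ i, (2 * n * ω - 1 + ω) / (ω + 1) ≤ i → i < 2 * n →
      indepCount (CC G p q) (i + 1) ≤ indepCount (CC G p q) i := by
  have hω1 : 1 ≤ ω := le_trans hp hpω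
  have hk1 := kfact n ω hω1
  have hkn := kfact2 n ω hω1
  intro i hki hi
  have hki' : n ≤ i := le_trans hkn hki
  have hkk : (ω + 1) * ((2 * n * ω - 1 + ω) / (ω + 1)) ≤ (ω + 1) * i :=
    Nat.mul_le_mul_left _ hki
  have hk2 : 2 * n * ω - 1 ≤ (ω + 1) * i := le_trans hk1 hkk
  rw [countformula, countformula]
  refine Finset.sum_le_sum fun S hS => ?_
  simp only [hn]
  have hjn : S.card ≤ n := hn ▸ Finset.card_le_univ S
  have hji : S.card ≤ i := le_trans hjn hki'
  rw [if_pos (by omega : S.card ≤ i + 1), if_pos hji]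
  have e : i + 1 - S.card = (i - S.card) + 1 := by omega
  rw [e]
  refine dd_decr p q (n - S.card) (i - S.card) ω hpω hqω ?_
  generalize hj : S.card = j at hjn hji
  rcases le_or_gt (2 * (n - j)) (i - j) with h | h
  · have e0 : 2 * (n - j) - (i - j) = 0 := by omega
    rw [e0, Nat.mul_zero]
    omega
  · have hij : i + j ≤ 2 * n := by omega
    have e1 : 2 * (n - j) - (i - j) = 2 * n - i - j := by omega
    rw [e1]
    have e2 : ω * (2 * n - i - j) + ω * i + ω * j = ω * (2 * n) := by
      rw [← Nat.mul_add, ← Nat.mul_add]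
      congr 1
      omega
    have e3 : ω * (2 * n) = 2 * n * ω := by ring
    have h5 : 1 * j ≤ ω * j := Nat.mul_le_mul_right j hω1
    have h6 : (ω + 1) * i = ω * i + i := by ring
    omega

lemma main_incr (G : SimpleGraph V) (n p q ω : ℕ) (hn : Fintype.card V = n)
    (hp : 1 ≤ p) (hq : 1 ≤ q) (hpω : p ≤ ω) (hqω : q ≤ ω) :
    ∀ i, i < 2 * n - (2 * n * ω - 1 + ω) / (ω + 1) →
      indepCount (CC G p q) i ≤ indepCount (CC G p q) (i + 1) := by
  have hω1 : 1 ≤ ω := le_trans hp hpω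
  have hkn := kfact2 n ω hω1
  intro i hit
  have hin : i + 1 ≤ n := by omega
  rw [countformula, countformula]
  refine Finset.sum_le_sum fun S hS => ?_
  simp only [hn]
  have hjn : S.card ≤ n := hn ▸ Finset.card_le_univ S
  rcases le_or_gt S.card i with hji | hji
  · rw [if_pos hji, if_pos (by omega : S.card ≤ i + 1)]
    have e : i + 1 - S.card = (i - S.card) + 1 := by omega
    rw [e]
    exact dd_incr p q (n - S.card) (i - S.card) hp hq (by omega)
  · rw [if_neg (by omega)]
    exact Nat.zero_le _

end Main

/-- for perfect `G` of order `n`, with `ω = max{ω(G), p, q}`, the coefficients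
of `I(G∘(K_p ∪ K_q); x)` decrease from index `⌈(2nω-1)/(ω+1)⌉` up to `2n` and increase from
index `0` up to `t = 2n - ⌈(2nω-1)/(ω+1)⌉`. -/
theorem corona_perfect_coeff_monotonicity {V : Type*} [Fintype V] (G : SimpleGraph V)
    (n : ℕ) (hn : Fintype.card V = n) (hn1 : 1 ≤ n) (p q : ℕ) (hp : 1 ≤ p) (hq : 1 ≤ q)
    (hG : IsPerfect G) :
    let Kpq := disjUnion (⊤ : SimpleGraph (Fin p)) (⊤ : SimpleGraph (Fin q))
    let s := indepCount (corona G Kpq)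
    let ω := max (cliqueNum G) (max p q)
    let k := (2 * n * ω - 1 + ω) / (ω + 1)
    (∀ i, k ≤ i → i < 2 * n → s (i + 1) ≤ s i) ∧
      (∀ i, i < 2 * n - k → s i ≤ s (i + 1)) := by
  intro Kpq s ω k
  have hpω : p ≤ ω := le_trans (le_max_left p q) (le_max_right _ _)
  have hqω : q ≤ ω := le_trans (le_max_right p q) (le_max_right _ _)
  exact ⟨fun i h1 h2 => main_decr G n p q ω hn hp hq hpω hqω i h1 h2,
    fun i h1 => main_incr G n p q ω hn hp hq hpω hqω i h1⟩
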